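/- arXiv:1604.04700 — 4 statements merged into one kernel-verified Lean document; each statement's English description precedes it below -/
import Mathlib

section
/- Universal modular symbols are antisymmetric: for nonzero vectors g₀,…,g_{n−1} in an n-dimensional vector space V over a field K, swapping two entries changes the sign: [g₀,…,g_i,…,g_j,…,g_{n−1}] = −[g₀,…,g_j,…,g_i,…,g_{n−1}]. Moreover this antisymmetry follows formally from the relations: (3) [g₀,…,g_{n−1}] = 0 whenever g₀,…,g_{n−1} are linearly dependent, and (4) Σ_{i=0}^{n} (−1)^i [g₀,…,ĝ_i,…,g_n] = 0 for any n+1 nonzero vectors. -/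
open Finset

section Aux

variable {V : Type*}

/-- Extend an `n`-tuple `g` by duplicating `g k` right after position `k+1`. -/
def extTuple {n : ℕ} (g : Fin n → V) (k : ℕ) (hk : k + 1 < n) : Fin (n + 1) → V :=
  fun i =>
    if h1 : (i : ℕ) ≤ k + 1 then g ⟨i, by omega⟩
    else if h2 : (i : ℕ) = k + 2 then g ⟨k, by omega⟩
    else g ⟨(i : ℕ) - 1, by have := i.isLt; omega⟩

lemma extTuple_val {n : ℕ} (g : Fin n → V) (k : ℕ) (hk : k + 1 < n)
    (i : Fin (n + 1)) (m : ℕ) (hm : m < n)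
    (h : ((i : ℕ) ≤ k + 1 ∧ m = (i : ℕ)) ∨ ((i : ℕ) = k + 2 ∧ m = k) ∨
      (k + 2 < (i : ℕ) ∧ m = (i : ℕ) - 1)) :
    extTuple g k hk i = g ⟨m, hm⟩ := by
  unfold extTuple
  split_ifs with h1 h2 <;>
    (apply congrArg g; apply Fin.ext; simp only; omega)

lemma succAbove_val' {n : ℕ} (i : Fin (n + 1)) (j : Fin n) :
    ((j : ℕ) < (i : ℕ) ∧ ((i.succAbove j : Fin (n + 1)) : ℕ) = (j : ℕ)) ∨
      ((i : ℕ) ≤ (j : ℕ) ∧ ((i.succAbove j : Fin (n + 1)) : ℕ) = (j : ℕ) + 1) := by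
  rcases lt_or_ge (j : ℕ) (i : ℕ) with h | h
  · left
    refine ⟨h, ?_⟩
    rw [Fin.succAbove_of_castSucc_lt _ _ (by simpa [Fin.lt_iff_val_lt_val] using h)]
    simp
  · right
    refine ⟨h, ?_⟩
    rw [Fin.succAbove_of_le_castSucc _ _ (by simpa [Fin.le_iff_val_le_val] using h)]
    simp

lemma swap_val' {n : ℕ} (a b j : Fin n) :
    ((j : ℕ) = (a : ℕ) ∧ ((Equiv.swap a b j : Fin n) : ℕ) = (b : ℕ)) ∨
      ((j : ℕ) ≠ (a : ℕ) ∧ (j : ℕ) = (b : ℕ) ∧ ((Equiv.swap a b j : Fin n) : ℕ) = (a : ℕ)) ∨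
      ((j : ℕ) ≠ (a : ℕ) ∧ (j : ℕ) ≠ (b : ℕ) ∧ ((Equiv.swap a b j : Fin n) : ℕ) = (j : ℕ)) := by
  by_cases h1 : j = a
  · left; subst h1; simp
  · by_cases h2 : j = b
    · right; left
      subst h2
      refine ⟨fun hc => h1 (Fin.ext hc), rfl, ?_⟩
      simp
    · right; right
      refine ⟨fun hc => h1 (Fin.ext hc), fun hc => h2 (Fin.ext hc), ?_⟩
      rw [Equiv.swap_apply_of_ne_of_ne h1 h2]

lemma succAbove_val_mk {n : ℕ} (x : Fin (n + 1)) (a : ℕ) (ha : a < n) :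
    (a < (x : ℕ) ∧ ((x.succAbove ⟨a, ha⟩ : Fin (n + 1)) : ℕ) = a) ∨
      ((x : ℕ) ≤ a ∧ ((x.succAbove ⟨a, ha⟩ : Fin (n + 1)) : ℕ) = a + 1) :=
  succAbove_val' x ⟨a, ha⟩

lemma swap_val_mk {n : ℕ} (a b j : ℕ) (ha : a < n) (hb : b < n) (hj : j < n) :
    (j = a ∧ ((Equiv.swap ⟨a, ha⟩ ⟨b, hb⟩ ⟨j, hj⟩ : Fin n) : ℕ) = b) ∨
      (j ≠ a ∧ j = b ∧ ((Equiv.swap ⟨a, ha⟩ ⟨b, hb⟩ ⟨j, hj⟩ : Fin n) : ℕ) = a) ∨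
      (j ≠ a ∧ j ≠ b ∧ ((Equiv.swap ⟨a, ha⟩ ⟨b, hb⟩ ⟨j, hj⟩ : Fin n) : ℕ) = j) :=
  swap_val' ⟨a, ha⟩ ⟨b, hb⟩ ⟨j, hj⟩

end Aux

section Adj

variable {K V M : Type*} [Field K] [AddCommGroup V] [Module K V] [AddCommGroup M] {n : ℕ}

/-- If a tuple has a repeated entry, it is linearly dependent, so `φ` vanishes on it. -/
lemma phi_eq_zero_of_dup (φ : (Fin n → V) → M)
    (h3 : ∀ g : Fin n → V, (∀ i, g i ≠ 0) → ¬ LinearIndependent K g → φ g = 0)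
    (f : Fin n → V) (hf : ∀ i, f i ≠ 0) (a b : Fin n) (hab : a ≠ b) (hfab : f a = f b) :
    φ f = 0 := by
  apply h3 f hf
  intro hli
  exact hab (hli.injective hfab)

/-- Antisymmetry under adjacent transposition. -/
lemma adj_swap (φ : (Fin n → V) → M)
    (h3 : ∀ g : Fin n → V, (∀ i, g i ≠ 0) → ¬ LinearIndependent K g → φ g = 0)
    (h4 : ∀ g : Fin (n + 1) → V, (∀ i, g i ≠ 0) →
      ∑ i : Fin (n + 1), ((-1 : ℤ) ^ (i : ℕ)) • φ (fun j => g (i.succAbove j)) = 0)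
    (g : Fin n → V) (hg : ∀ x, g x ≠ 0) (k : ℕ) (hk0 : k < n) (hk : k + 1 < n) :
    φ (g ∘ Equiv.swap ⟨k, hk0⟩ ⟨k + 1, hk⟩) = - φ g := by
  have hnz : ∀ i, extTuple g k hk i ≠ 0 := by
    intro i
    unfold extTuple
    split_ifs <;> apply hg
  -- evaluate entries of the boundary tuples, all in terms of naturals
  have key2 : ∀ (x : Fin (n + 1)) (a : ℕ) (ha : a < n) (m : ℕ) (hm : m < n),
      ((a < (x : ℕ) ∧ ((a ≤ k + 1 ∧ m = a) ∨ (a = k + 2 ∧ m = k) ∨ (k + 2 < a ∧ m = a - 1))) ∨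
        ((x : ℕ) ≤ a ∧ ((a + 1 ≤ k + 1 ∧ m = a + 1) ∨ (a + 1 = k + 2 ∧ m = k) ∨
          (k + 2 < a + 1 ∧ m = a)))) →
      extTuple g k hk (x.succAbove ⟨a, ha⟩) = g ⟨m, hm⟩ := by
    intro x a ha m hm hcond
    apply extTuple_val
    have h1 := succAbove_val_mk x a ha
    omega
  have hsum := h4 (extTuple g k hk) hnz
  set K1 : Fin (n + 1) := ⟨k, by omega⟩ with hK1
  set K3 : Fin (n + 1) := ⟨k + 2, by omega⟩ with hK3
  have hK1v : (K1 : ℕ) = k := rfl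
  have hK3v : (K3 : ℕ) = k + 2 := rfl
  have hdup : ∀ (x : Fin (n + 1)) (a b : ℕ) (ha : a < n) (hb : b < n), a ≠ b →
      extTuple g k hk (x.succAbove ⟨a, ha⟩) = extTuple g k hk (x.succAbove ⟨b, hb⟩) →
      ((-1 : ℤ) ^ (x : ℕ)) • φ (fun j => extTuple g k hk (x.succAbove j)) = 0 := by
    intro x a b ha hb hab heq
    have hne : (⟨a, ha⟩ : Fin n) ≠ ⟨b, hb⟩ := Fin.ne_of_val_ne (show a ≠ b from hab)
    rw [phi_eq_zero_of_dup (K := K) φ h3 _ (fun j => hnz _) ⟨a, ha⟩ ⟨b, hb⟩ hne heq, smul_zero]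
  have hzero : ∀ x ∈ (univ : Finset (Fin (n + 1))),
      x ∉ ({K1, K3} : Finset (Fin (n + 1))) →
      ((-1 : ℤ) ^ (x : ℕ)) • φ (fun j => extTuple g k hk (x.succAbove j)) = 0 := by
    intro x _ hx
    simp only [Finset.mem_insert, Finset.mem_singleton, not_or] at hx
    have hx1 : (x : ℕ) ≠ k := fun hc => hx.1 (Fin.ext hc)
    have hx3 : (x : ℕ) ≠ k + 2 := fun hc => hx.2 (Fin.ext hc)
    have hxlt := x.isLt
    have hcase : (x : ℕ) < k ∨ (x : ℕ) = k + 1 ∨ k + 2 < (x : ℕ) := by omega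
    rcases hcase with hc | hc | hc
    · exact hdup x (k - 1) (k + 1) (by omega) hk (by omega)
        ((key2 x _ _ k (by omega) (by omega)).trans (key2 x _ _ k (by omega) (by omega)).symm)
    · exact hdup x k (k + 1) (by omega) hk (by omega)
        ((key2 x _ _ k (by omega) (by omega)).trans (key2 x _ _ k (by omega) (by omega)).symm)
    · exact hdup x k (k + 2) (by omega) (by omega) (by omega)
        ((key2 x _ _ k (by omega) (by omega)).trans (key2 x _ _ k (by omega) (by omega)).symm)
  have hsum2 : ∑ x ∈ ({K1, K3} : Finset (Fin (n + 1))),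
      ((-1 : ℤ) ^ (x : ℕ)) • φ (fun j => extTuple g k hk (x.succAbove j)) = 0 := by
    rw [Finset.sum_subset (Finset.subset_univ _) hzero]
    exact hsum
  have hK13 : K1 ≠ K3 := Fin.ne_of_val_ne (show k ≠ k + 2 by omega)
  rw [Finset.sum_pair hK13] at hsum2
  -- identify the two boundary tuples
  have hA : (fun j => extTuple g k hk (K1.succAbove j)) =
      g ∘ Equiv.swap ⟨k, hk0⟩ ⟨k + 1, hk⟩ := by
    funext j
    show extTuple g k hk (K1.succAbove j) = g (Equiv.swap ⟨k, hk0⟩ ⟨k + 1, hk⟩ j)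
    rw [← Fin.eta j j.isLt]
    rw [← Fin.eta (Equiv.swap (⟨k, hk0⟩ : Fin n) (⟨k + 1, hk⟩ : Fin n) ⟨(j : ℕ), j.isLt⟩)
      (Equiv.swap (⟨k, hk0⟩ : Fin n) (⟨k + 1, hk⟩ : Fin n) ⟨(j : ℕ), j.isLt⟩).isLt]
    apply key2
    have h2 := swap_val_mk k (k + 1) (j : ℕ) hk0 hk j.isLt
    have hjk := j.isLt
    omega
  have hB : (fun j => extTuple g k hk (K3.succAbove j)) = g := by
    funext j
    show extTuple g k hk (K3.succAbove j) = g j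
    rw [← Fin.eta j j.isLt]
    apply key2
    have hjk := j.isLt
    omega
  rw [hA, hB, hK1v, hK3v] at hsum2
  have hpow : ((-1 : ℤ) ^ (k + 2)) = (-1 : ℤ) ^ k := by ring
  rw [hpow, ← smul_add] at hsum2
  have hone : ((-1 : ℤ) ^ k) • (((-1 : ℤ) ^ k) •
      (φ (g ∘ Equiv.swap ⟨k, hk0⟩ ⟨k + 1, hk⟩) + φ g)) =
      φ (g ∘ Equiv.swap ⟨k, hk0⟩ ⟨k + 1, hk⟩) + φ g := by
    rw [smul_smul, ← pow_add, Even.neg_one_pow ⟨k, rfl⟩, one_smul]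
  have hz : φ (g ∘ Equiv.swap ⟨k, hk0⟩ ⟨k + 1, hk⟩) + φ g = 0 := by
    rw [← hone, hsum2, smul_zero]
  exact add_eq_zero_iff_eq_neg.mp hz

end Adj

/-- Universal modular symbols are antisymmetric, and this follows formally from the
relations (3) (vanishing on linearly dependent tuples) and (4) (vanishing alternating sums):
any function `φ` on `n`-tuples of nonzero vectors of an `n`-dimensional `K`-vector space `V`,
with values in an abelian group, which satisfies (3) and (4), satisfies
`[… gᵢ … gⱼ …] = −[… gⱼ … gᵢ …]`. -/
theorem modularSymbol_antisymm {K V M : Type*} [Field K] [AddCommGroup V] [Module K V]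
    [AddCommGroup M] {n : ℕ} (hdim : Module.finrank K V = n)
    (φ : (Fin n → V) → M)
    (h3 : ∀ g : Fin n → V, (∀ i, g i ≠ 0) → ¬ LinearIndependent K g → φ g = 0)
    (h4 : ∀ g : Fin (n + 1) → V, (∀ i, g i ≠ 0) →
      ∑ i : Fin (n + 1), ((-1 : ℤ) ^ (i : ℕ)) • φ (fun j => g (i.succAbove j)) = 0) :
    ∀ g : Fin n → V, (∀ i, g i ≠ 0) → ∀ i j : Fin n, i ≠ j →
      φ (g ∘ Equiv.swap i j) = - φ g := by
  have main : ∀ d : ℕ, ∀ g : Fin n → V, (∀ x, g x ≠ 0) → ∀ iv jv : ℕ,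
      ∀ (hiv : iv < n) (hjv : jv < n),
      iv < jv → jv - iv = d → φ (g ∘ Equiv.swap ⟨iv, hiv⟩ ⟨jv, hjv⟩) = - φ g := by
    intro d
    induction d using Nat.strong_induction_on with
    | _ d ih =>
      intro g hg iv jv hiv hjv hij hd
      by_cases hadj : jv = iv + 1
      · subst hadj
        exact adj_swap (K := K) φ h3 h4 g hg iv hiv hjv
      · -- general case: swap i j = σ ∘ swap (i+1) j ∘ σ with σ = swap i (i+1)
        have hlt : iv + 1 < n := by omega
        set i : Fin n := ⟨iv, hiv⟩ with hi
        set j : Fin n := ⟨jv, hjv⟩ with hj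
        set i' : Fin n := ⟨iv + 1, hlt⟩ with hi'
        set σ : Equiv.Perm (Fin n) := Equiv.swap i i' with hσ
        have hii' : i ≠ i' := Fin.ne_of_val_ne (show iv ≠ iv + 1 by omega)
        have hji : j ≠ i := Fin.ne_of_val_ne (show jv ≠ iv by omega)
        have hji' : j ≠ i' := Fin.ne_of_val_ne (show jv ≠ iv + 1 by omega)
        have e1 : σ i = i' := Equiv.swap_apply_left i i'
        have e2 : σ i' = i := Equiv.swap_apply_right i i'
        have e3 : σ j = j := Equiv.swap_apply_of_ne_of_ne hji hji'
        have e4 : Equiv.swap i' j i' = j := Equiv.swap_apply_left i' j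
        have e5 : Equiv.swap i' j j = i' := Equiv.swap_apply_right i' j
        have e6 : Equiv.swap i' j i = i := Equiv.swap_apply_of_ne_of_ne hii' (Ne.symm hji)
        have hdecomp : ∀ x : Fin n, Equiv.swap i j x = σ (Equiv.swap i' j (σ x)) := by
          intro x
          by_cases hx1 : x = i
          · subst hx1
            rw [Equiv.swap_apply_left, e1, e4, e3]
          · by_cases hx2 : x = i'
            · subst hx2
              rw [Equiv.swap_apply_of_ne_of_ne hii'.symm (Ne.symm hji'), e2, e6, e1]
            · by_cases hx3 : x = j
              · subst hx3
                rw [Equiv.swap_apply_right, e3, e5, e2]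
              · have f1 : σ x = x := Equiv.swap_apply_of_ne_of_ne hx1 hx2
                rw [Equiv.swap_apply_of_ne_of_ne hx1 hx3, f1,
                  Equiv.swap_apply_of_ne_of_ne hx2 hx3, f1]
        have hcomp : g ∘ Equiv.swap i j = (((g ∘ σ) ∘ Equiv.swap i' j) ∘ σ) := by
          funext x
          simp only [Function.comp_apply]
          rw [hdecomp x]
        have step1 : φ ((((g ∘ σ) ∘ Equiv.swap i' j) ∘ σ)) =
            - φ ((g ∘ σ) ∘ Equiv.swap i' j) :=
          adj_swap (K := K) φ h3 h4 ((g ∘ σ) ∘ Equiv.swap i' j) (fun x => hg _) iv hiv hlt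
        have step2 : φ ((g ∘ σ) ∘ Equiv.swap i' j) = - φ (g ∘ σ) :=
          ih (jv - (iv + 1)) (by omega) (g ∘ σ) (fun x => hg _) (iv + 1) jv hlt hjv
            (by omega) rfl
        have step3 : φ (g ∘ σ) = - φ g :=
          adj_swap (K := K) φ h3 h4 g hg iv hiv hlt
        rw [hcomp, step1, step2, step3]
        abel
  intro g hg i j hij
  have hvij : (i : ℕ) ≠ (j : ℕ) := fun hc => hij (Fin.ext hc)
  rcases Nat.lt_or_ge (i : ℕ) (j : ℕ) with h | h
  · have := main ((j : ℕ) - (i : ℕ)) g hg (i : ℕ) (j : ℕ) i.isLt j.isLt h rfl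
    simpa [Fin.eta] using this
  · have hlt : (j : ℕ) < (i : ℕ) := by omega
    have := main ((i : ℕ) - (j : ℕ)) g hg (j : ℕ) (i : ℕ) j.isLt i.isLt hlt rfl
    rw [Equiv.swap_comm]
    simpa [Fin.eta] using this
end

section
/- Universal modular symbols are projectively invariant: in the abelian group generated by symbols [g₀,…,g_{n−1}] subject to the dependence relation and the alternating-sum relation, one has [a·g₀, g₁,…,g_{n−1}] = [g₀, g₁,…,g_{n−1}] for every nonzero scalar a ∈ K − {0}. -/
open Finset

/-- Universal modular symbols are projectively invariant, formally as a consequence of the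
relations (3) (vanishing on linearly dependent tuples) and (4) (vanishing alternating sums):
any function `φ` on `n`-tuples of nonzero vectors of an `n`-dimensional `K`-vector space `V`,
with values in an abelian group, which satisfies (3) and (4), satisfies
`[a·g₀, g₁, …, g_{n−1}] = [g₀, g₁, …, g_{n−1}]` for any nonzero scalar `a`. -/
theorem modularSymbol_scale_invariant {K V M : Type*} [Field K] [AddCommGroup V] [Module K V]
    [AddCommGroup M] {n : ℕ} (hn : 0 < n) (hdim : Module.finrank K V = n)
    (φ : (Fin n → V) → M)
    (h3 : ∀ g : Fin n → V, (∀ i, g i ≠ 0) → ¬ LinearIndependent K g → φ g = 0)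
    (h4 : ∀ g : Fin (n + 1) → V, (∀ i, g i ≠ 0) →
      ∑ i : Fin (n + 1), ((-1 : ℤ) ^ (i : ℕ)) • φ (fun j => g (i.succAbove j)) = 0) :
    ∀ g : Fin n → V, (∀ i, g i ≠ 0) → ∀ a : K, a ≠ 0 →
      φ (Function.update g ⟨0, hn⟩ (a • g ⟨0, hn⟩)) = φ g := by
  intro g hg a ha
  set g0 : Fin n := ⟨0, hn⟩ with hg0
  have v1 : ((1 : Fin (n + 1)) : ℕ) = 1 := by
    rw [Fin.val_one']; exact Nat.mod_eq_of_lt (by omega)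
  set h : Fin (n + 1) → V := Fin.cons (a • g g0) g with hh
  have hne : ∀ i, h i ≠ 0 := by
    intro i
    refine Fin.cases ?_ ?_ i
    · simpa [hh] using smul_ne_zero ha (hg g0)
    · intro j; simpa [hh] using hg j
  have key := h4 h hne
  -- terms with index ≥ 2 vanish
  have hz : ∀ i : Fin (n + 1), 2 ≤ (i : ℕ) → φ (fun j => h (i.succAbove j)) = 0 := by
    intro i hi
    have hn2 : 2 ≤ n := by have := i.isLt; omega
    have h01 : (⟨0, hn⟩ : Fin n) ≠ ⟨1, by omega⟩ := by simp [Fin.ext_iff]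
    apply h3
    · intro j
      exact hne _
    · intro hli
      have e0 : i.succAbove ⟨0, hn⟩ = (0 : Fin (n + 1)) := by
        rw [Fin.succAbove_of_castSucc_lt _ _ (by simp only [Fin.lt_def, Fin.coe_castSucc]; omega)]
        ext; simp
      have e1 : i.succAbove ⟨1, by omega⟩ = (1 : Fin (n + 1)) := by
        rw [Fin.succAbove_of_castSucc_lt _ _
          (by simp only [Fin.lt_def, Fin.coe_castSucc]
              exact Nat.lt_of_lt_of_le Nat.one_lt_two hi)]
        rw [Fin.ext_iff, Fin.coe_castSucc, v1]
      have e1' : (1 : Fin (n + 1)) = Fin.succ ⟨0, hn⟩ := by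
        rw [Fin.ext_iff, v1, Fin.val_succ]
      have hv0 : h (i.succAbove ⟨0, hn⟩) = a • g g0 := by rw [e0]; simp [hh]
      have hv1 : h (i.succAbove ⟨1, by omega⟩) = g g0 := by
        rw [e1, e1', hh, Fin.cons_succ]
      have hli' := Fintype.linearIndependent_iff.mp hli
        (fun j => if j = ⟨0, hn⟩ then (1 : K) else if j = ⟨1, by omega⟩ then -a else 0)
      have hsum : ∑ j : Fin n,
          (if j = (⟨0, hn⟩ : Fin n) then (1 : K) else if j = ⟨1, by omega⟩ then -a else 0)
            • h (i.succAbove j) = 0 := by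
        rw [Finset.sum_eq_add_of_mem (⟨0, hn⟩ : Fin n) (⟨1, by omega⟩ : Fin n)
          (Finset.mem_univ _) (Finset.mem_univ _) h01 ?_]
        · simp [if_neg (Ne.symm h01), hv0, hv1]
        · intro c _ hc
          rcases hc with ⟨hc0, hc1⟩
          simp [hc0, hc1]
      have h1 := hli' hsum ⟨0, hn⟩
      simp at h1
  -- reduce the sum to the indices 0 and 1
  have h01' : (0 : Fin (n + 1)) ≠ 1 := by
    simp [Fin.ext_iff, v1]
    omega
  have hsum2 : ∑ i : Fin (n + 1), ((-1 : ℤ) ^ (i : ℕ)) • φ (fun j => h (i.succAbove j))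
      = ∑ i ∈ ({0, 1} : Finset (Fin (n + 1))),
          ((-1 : ℤ) ^ (i : ℕ)) • φ (fun j => h (i.succAbove j)) := by
    refine (Finset.sum_subset (Finset.subset_univ _) ?_).symm
    intro i _ hi
    simp only [Finset.mem_insert, Finset.mem_singleton, not_or] at hi
    have h2 : 2 ≤ (i : ℕ) := by
      rcases hi with ⟨hi0, hi1⟩
      have i0 : (i : ℕ) ≠ 0 := fun hv => hi0 (Fin.ext (by simp [hv]))
      have i1 : (i : ℕ) ≠ 1 := fun hv => hi1 (Fin.ext (by rw [hv, v1]))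
      omega
    rw [hz i h2, smul_zero]
  rw [hsum2, Finset.sum_pair h01'] at key
  -- compute the two faces
  have f0 : (fun j => h ((0 : Fin (n + 1)).succAbove j)) = g := by
    funext j
    simp [hh, Fin.zero_succAbove]
  have f1 : (fun j => h ((1 : Fin (n + 1)).succAbove j)) = Function.update g g0 (a • g g0) := by
    funext j
    rcases eq_or_ne j g0 with rfl | hj
    · have e : (1 : Fin (n + 1)).succAbove g0 = 0 := by
        rw [Fin.succAbove_of_castSucc_lt _ _ (by rw [Fin.lt_def, v1]; simp [hg0])]
        ext; simp [hg0]
      rw [e]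
      simp [hh]
    · have hj1 : 1 ≤ (j : ℕ) := by
        rw [Ne, Fin.ext_iff] at hj
        simp [hg0] at hj
        omega
      have e : (1 : Fin (n + 1)).succAbove j = j.succ := by
        rw [Fin.succAbove_of_le_castSucc _ _ (by rw [Fin.le_def, v1]; simp; omega)]
      rw [e]
      simp [hh, Function.update_of_ne hj]
  rw [f0, f1, v1] at key
  simp only [Fin.val_zero, pow_zero, pow_one, one_smul, neg_smul, add_neg_eq_zero] at key
  exact key.symm
end

section
/- For n = dim(V) ≥ 2, the group presented by generators ∂(g₀,…,g_n) (gᵢ ∈ V) with relations (a) ∂(g₀,…,g_n)=0 if the collection does not contain 0 or contains 0 but fails to span V, and (b) alternating sums vanish, is isomorphic to the group presented by generators ∂(0,g₁,…,g_n) (gᵢ ∈ V−{0}) with relations: (1) ∂(0,g₁,…,g_n)=0 if g₁,…,g_n are linearly dependent, and (2) Σ_{i=1}^{n+1}(−1)^i ∂(0,g₁,…,ĝᵢ,…,g_{n+1}) = 0. -/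
open Finset

section FinAux
variable {m : ℕ}

lemma succAbove_val'_s11 {m : ℕ} (p : Fin (m+1)) (i : Fin m) :
    ((p.succAbove i : Fin (m+1)) : ℕ) = if (i : ℕ) < (p:ℕ) then (i:ℕ) else (i:ℕ)+1 := by
  simp only [Fin.succAbove, Fin.lt_def, Fin.coe_castSucc]
  split_ifs <;> simp

/-- the index of `b` in the tuple obtained by deleting position `a`. -/
def delIdx (a b : Fin (m+2)) : Fin (m+1) :=
  if h : (b:ℕ) < (a:ℕ) then ⟨b, by have := a.isLt; omega⟩ else ⟨(b:ℕ) - 1, by have := b.isLt; omega⟩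

lemma delIdx_val (a b : Fin (m+2)) :
    ((delIdx a b : Fin (m+1)) : ℕ) = if (b:ℕ) < (a:ℕ) then (b:ℕ) else (b:ℕ) - 1 := by
  unfold delIdx; split_ifs <;> rfl

lemma val_ne_of_ne {k : ℕ} {a b : Fin k} (h : a ≠ b) : (a:ℕ) ≠ (b:ℕ) :=
  fun hv => h (Fin.ext hv)

lemma succAbove_delIdx {a b : Fin (m+2)} (h : a ≠ b) : a.succAbove (delIdx a b) = b := by
  have := val_ne_of_ne h
  apply Fin.ext
  rw [succAbove_val'_s11, delIdx_val]
  split_ifs <;> omega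

lemma delIdx_succAbove (p : Fin (m+2)) (i : Fin (m+1)) : delIdx p (p.succAbove i) = i := by
  apply Fin.ext
  rw [delIdx_val, succAbove_val'_s11]
  split_ifs <;> omega

lemma succAbove_succAbove_delIdx {a b : Fin (m+2)} (h : a ≠ b) (k : Fin m) :
    a.succAbove ((delIdx a b).succAbove k) = b.succAbove ((delIdx b a).succAbove k) := by
  have := val_ne_of_ne h
  have ha := a.isLt; have hb := b.isLt
  apply Fin.ext
  rw [succAbove_val'_s11, succAbove_val'_s11, succAbove_val'_s11, succAbove_val'_s11, delIdx_val, delIdx_val]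
  split_ifs <;> omega

lemma neg_one_pow_eq_neg {s t : ℕ} (h : (s + t) % 2 = 1) : ((-1:ℤ))^s = -(-1)^t := by
  rcases Nat.even_or_odd s with hs | hs
  · have ht : Odd t := by rcases hs with ⟨k,hk⟩; rw [Nat.odd_iff]; omega
    rw [hs.neg_one_pow, ht.neg_one_pow]; try ring
  · have ht : Even t := by rcases hs with ⟨k,hk⟩; rw [Nat.even_iff]; omega
    rw [hs.neg_one_pow, ht.neg_one_pow]; try ring

lemma delIdx_parity {a b : Fin (m+2)} (h : a ≠ b) :
    (((a:ℕ) + ((delIdx a b : Fin (m+1)):ℕ)) + ((b:ℕ) + ((delIdx b a : Fin (m+1)):ℕ))) % 2 = 1 := by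
  have := val_ne_of_ne h
  rw [delIdx_val, delIdx_val]
  split_ifs <;> omega

/-- sum over `Fin (m+2)` concentrated on two indices -/
lemma sum_eq_pair {M : Type*} [AddCommMonoid M] (F : Fin (m+2) → M) (p q : Fin (m+2))
    (hpq : p ≠ q) (h0 : ∀ j, j ≠ p → j ≠ q → F j = 0) : ∑ j, F j = F p + F q := by
  rw [Fin.sum_univ_succAbove F p, Fin.sum_univ_succAbove (fun i => F (p.succAbove i)) (delIdx p q),
    succAbove_delIdx hpq]
  have : ∀ k : Fin m, F (p.succAbove ((delIdx p q).succAbove k)) = 0 := by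
    intro k
    apply h0
    · exact Fin.succAbove_ne _ _
    · intro hc
      have h2 : (delIdx p q).succAbove k = delIdx p q :=
        Fin.succAbove_right_injective (p := p) (by rw [hc, succAbove_delIdx hpq])
      exact Fin.succAbove_ne _ _ h2
  simp [this]

end FinAux

variable {K V : Type} [Field K] [AddCommGroup V] [Module K V] {n : ℕ}

/-- Relations of the first presentation: (a) a generator `∂(g₀,…,g_n)` is a relation if the
tuple does not contain `0`, or contains `0` but fails to span `V`; (b) alternating sums of
deletions of `(n+2)`-tuples are relations. -/
def relA (K : Type) [Field K] (V : Type) [AddCommGroup V] [Module K V] (n : ℕ) :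
    Set (FreeAbelianGroup (Fin (n + 1) → V)) :=
  {x | (∃ g : Fin (n + 1) → V,
          ((¬ ∃ i, g i = 0) ∨ ((∃ i, g i = 0) ∧ Submodule.span K (Set.range g) ≠ ⊤)) ∧
          x = FreeAbelianGroup.of g) ∨
       (∃ g : Fin (n + 2) → V,
          x = ∑ i : Fin (n + 2), ((-1 : ℤ) ^ (i : ℕ)) •
                FreeAbelianGroup.of (fun j => g (i.succAbove j)))}

/-- The group of the first presentation, with generators `∂(g₀,…,g_n)`, `gᵢ ∈ V`. -/
def GroupA (K : Type) [Field K] (V : Type) [AddCommGroup V] [Module K V] (n : ℕ) :=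
  FreeAbelianGroup (Fin (n + 1) → V) ⧸ AddSubgroup.closure (relA K V n)

/-- Relations of the second presentation: (1) a generator `∂(0,g₁,…,g_n)` with `g₁,…,g_n`
linearly dependent is a relation; (2) alternating sums of deletions of `(n+1)`-tuples of
nonzero vectors are relations. -/
def relB (K : Type) [Field K] (V : Type) [AddCommGroup V] [Module K V] (n : ℕ) :
    Set (FreeAbelianGroup {g : Fin n → V // ∀ i, g i ≠ 0}) :=
  {x | (∃ g : {g : Fin n → V // ∀ i, g i ≠ 0},
          ¬ LinearIndependent K (g : Fin n → V) ∧ x = FreeAbelianGroup.of g) ∨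
       (∃ (g : Fin (n + 1) → V) (hg : ∀ i, g i ≠ 0),
          x = ∑ i : Fin (n + 1), ((-1 : ℤ) ^ (i : ℕ)) •
                FreeAbelianGroup.of
                  (⟨fun j => g (i.succAbove j), fun j => hg (i.succAbove j)⟩ :
                    {g : Fin n → V // ∀ i, g i ≠ 0}))}

/-- The group of the second presentation, with generators `∂(0,g₁,…,g_n)`, `gᵢ ∈ V − {0}`. -/
def GroupB (K : Type) [Field K] (V : Type) [AddCommGroup V] [Module K V] (n : ℕ) :=
  FreeAbelianGroup {g : Fin n → V // ∀ i, g i ≠ 0} ⧸ AddSubgroup.closure (relB K V n)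

noncomputable instance : AddCommGroup (GroupA K V n) := by
  unfold GroupA; infer_instance

noncomputable instance : AddCommGroup (GroupB K V n) := by
  unfold GroupB; infer_instance

section SpanAux
open Submodule
variable {K V : Type} [Field K] [AddCommGroup V] [Module K V] {n : ℕ}
variable [FiniteDimensional K V]

lemma indep_iff_span_top (hdim : Module.finrank K V = n) (e : Fin n → V) :
    LinearIndependent K e ↔ span K (Set.range e) = ⊤ := by
  constructor
  · intro h
    exact h.span_eq_top_of_card_eq_finrank' (by simp [hdim])
  · intro h
    rw [linearIndependent_iff_card_eq_finrank_span, Set.finrank, h, finrank_top, hdim]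
    simp

lemma span_ne_top_of_two_zeros (hn0 : 0 < n) (hdim : Module.finrank K V = n)
    (g : Fin (n+1) → V) (a b : Fin (n+1)) (ha : g a = 0) (hb : g b = 0) (hab : a ≠ b) :
    span K (Set.range g) ≠ ⊤ := by
  intro htop
  classical
  set s : Finset V := Finset.image g ((Finset.univ.erase a).erase b) with hs
  have hsub : Set.range g ⊆ insert (0:V) ↑s := by
    rintro x ⟨k, rfl⟩
    by_cases hka : k = a
    · subst hka; rw [ha]; exact Set.mem_insert _ _
    by_cases hkb : k = b
    · subst hkb; rw [hb]; exact Set.mem_insert _ _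
    · exact Set.mem_insert_of_mem _ (Finset.mem_image_of_mem g
        (Finset.mem_erase.2 ⟨hkb, Finset.mem_erase.2 ⟨hka, Finset.mem_univ k⟩⟩))
  have hle : span K (Set.range g) ≤ span K (s : Set V) :=
    le_trans (span_mono hsub) (le_of_eq span_insert_zero)
  have h1 : Module.finrank K (span K (s : Set V)) ≤ s.card := finrank_span_finset_le_card s
  have h2 : s.card ≤ n - 1 := by
    rw [hs]
    calc (Finset.image g ((Finset.univ.erase a).erase b)).card
        ≤ ((Finset.univ.erase a).erase b).card := Finset.card_image_le
    _ = n - 1 := by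
        rw [Finset.card_erase_of_mem (Finset.mem_erase.2 ⟨hab.symm, Finset.mem_univ b⟩),
          Finset.card_erase_of_mem (Finset.mem_univ a)]
        simp
  have h3 : Module.finrank K (span K (Set.range g)) ≤ Module.finrank K (span K (s:Set V)) :=
    Submodule.finrank_mono hle
  rw [htop, finrank_top, hdim] at h3
  omega

lemma range_eq_insert_zero (g : Fin (n+1) → V) (i : Fin (n+1)) (h0 : g i = 0) :
    Set.range g = insert (0:V) (Set.range (fun j => g (i.succAbove j))) := by
  ext x
  constructor
  · rintro ⟨k, rfl⟩
    by_cases hk : k = i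
    · subst hk; rw [h0]; exact Set.mem_insert _ _
    · obtain ⟨z, hz⟩ := Fin.exists_succAbove_eq hk
      exact Set.mem_insert_of_mem _ ⟨z, by simp [hz]⟩
  · rintro (rfl | ⟨z, rfl⟩)
    · exact ⟨i, h0⟩
    · exact ⟨i.succAbove z, rfl⟩

lemma span_eq_rest (g : Fin (n+1) → V) (i : Fin (n+1)) (h0 : g i = 0) :
    span K (Set.range g) = span K (Set.range (fun j => g (i.succAbove j))) := by
  rw [range_eq_insert_zero g i h0, span_insert_zero]

end SpanAux

section PhiGen
open FreeAbelianGroup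
variable {V : Type} [AddCommGroup V] {n : ℕ}

open scoped Classical in
/-- the map on generators of the first presentation -/
noncomputable def phiGen (g : Fin (n + 1) → V) :
    FreeAbelianGroup {e : Fin n → V // ∀ i, e i ≠ 0} :=
  if h : ∃ i, g i = 0 ∧ ∀ j, j ≠ i → g j ≠ 0 then
    ((-1 : ℤ) ^ ((h.choose : Fin (n+1)) : ℕ)) • FreeAbelianGroup.of
      ⟨fun j => g (h.choose.succAbove j),
        fun j => h.choose_spec.2 _ (Fin.succAbove_ne _ _)⟩
  else 0

lemma phiGen_eq (g : Fin (n+1) → V) (i : Fin (n+1)) (h0 : g i = 0)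
    (h1 : ∀ j, j ≠ i → g j ≠ 0) :
    phiGen g = ((-1:ℤ)^(i:ℕ)) • FreeAbelianGroup.of
      (⟨fun j => g (i.succAbove j), fun j => h1 _ (Fin.succAbove_ne _ _)⟩ :
        {e : Fin n → V // ∀ i, e i ≠ 0}) := by
  have hex : ∃ i, g i = 0 ∧ ∀ j, j ≠ i → g j ≠ 0 := ⟨i, h0, h1⟩
  have hc : hex.choose = i := by
    by_contra hne
    exact h1 _ hne hex.choose_spec.1
  classical
  unfold phiGen
  rw [dif_pos hex]
  have h2 : (⟨fun j => g (hex.choose.succAbove j), fun j => hex.choose_spec.2 _ (Fin.succAbove_ne _ _)⟩ :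
      {e : Fin n → V // ∀ i, e i ≠ 0}) = ⟨fun j => g (i.succAbove j), fun j => h1 _ (Fin.succAbove_ne _ _)⟩ :=
    Subtype.ext (funext fun j => show g (hex.choose.succAbove j) = g (i.succAbove j) by rw [hc])
  rw [h2, hc]

lemma phiGen_eq_zero_of_no_zero (g : Fin (n+1) → V) (h : ∀ i, g i ≠ 0) :
    phiGen g = 0 := by
  classical
  unfold phiGen
  rw [dif_neg]
  rintro ⟨i, h0, -⟩
  exact h i h0

lemma phiGen_eq_zero_of_two_zeros (g : Fin (n+1) → V) (a b : Fin (n+1))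
    (ha : g a = 0) (hb : g b = 0) (hab : a ≠ b) : phiGen g = 0 := by
  classical
  unfold phiGen
  rw [dif_neg]
  rintro ⟨i, -, h1⟩
  by_cases hia : a = i
  · exact h1 b (fun hc => hab (hia.trans hc.symm)) hb
  · exact h1 a hia ha

end PhiGen
section Main
open FreeAbelianGroup Submodule

variable {K V : Type} [Field K] [AddCommGroup V] [Module K V] {n : ℕ}

/-- quotient map for presentation A -/
noncomputable def mkA : FreeAbelianGroup (Fin (n+1) → V) →+ GroupA K V n :=
  QuotientAddGroup.mk' (AddSubgroup.closure (relA K V n))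

/-- quotient map for presentation B -/
noncomputable def mkB : FreeAbelianGroup {g : Fin n → V // ∀ i, g i ≠ 0} →+ GroupB K V n :=
  QuotientAddGroup.mk' (AddSubgroup.closure (relB K V n))

lemma mkA_apply (x : FreeAbelianGroup (Fin (n+1) → V)) :
    mkA (K := K) x = QuotientAddGroup.mk x := rfl

lemma mkA_eq_zero {x : FreeAbelianGroup (Fin (n+1) → V)} (hx : x ∈ relA K V n) :
    mkA (K := K) x = 0 :=
  (QuotientAddGroup.eq_zero_iff x).2 (AddSubgroup.subset_closure hx)

lemma mkB_eq_zero {x : FreeAbelianGroup {g : Fin n → V // ∀ i, g i ≠ 0}} (hx : x ∈ relB K V n) :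
    mkB (K := K) x = 0 :=
  (QuotientAddGroup.eq_zero_iff x).2 (AddSubgroup.subset_closure hx)

lemma mkA_of_no_zero (g : Fin (n+1) → V) (hg : ∀ i, g i ≠ 0) : mkA (K := K) (of g) = 0 :=
  mkA_eq_zero (Or.inl ⟨g, Or.inl (by rintro ⟨i, hi⟩; exact hg i hi), rfl⟩)

lemma mkA_of_not_span (g : Fin (n+1) → V) (i : Fin (n+1)) (h0 : g i = 0)
    (hs : span K (Set.range g) ≠ ⊤) : mkA (K := K) (of g) = 0 :=
  mkA_eq_zero (Or.inl ⟨g, Or.inr ⟨⟨i, h0⟩, hs⟩, rfl⟩)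

variable [FiniteDimensional K V]

lemma mkA_of_two_zeros (hn0 : 0 < n) (hdim : Module.finrank K V = n) (g : Fin (n+1) → V)
    (a b : Fin (n+1)) (ha : g a = 0) (hb : g b = 0) (hab : a ≠ b) : mkA (K := K) (of g) = 0 :=
  mkA_of_not_span g a ha (span_ne_top_of_two_zeros hn0 hdim g a b ha hb hab)

omit [FiniteDimensional K V] in
lemma phiGen_comp_two_zeros (h : Fin (n+2) → V) (j a b : Fin (n+2))
    (ha : h a = 0) (hb : h b = 0) (haj : a ≠ j) (hbj : b ≠ j) (hab : a ≠ b) :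
    phiGen (fun k => h (j.succAbove k)) = 0 := by
  apply phiGen_eq_zero_of_two_zeros _ (delIdx j a) (delIdx j b)
  · show h (j.succAbove (delIdx j a)) = 0
    rw [succAbove_delIdx (Ne.symm haj)]; exact ha
  · show h (j.succAbove (delIdx j b)) = 0
    rw [succAbove_delIdx (Ne.symm hbj)]; exact hb
  · intro hc
    apply hab
    rw [← succAbove_delIdx (Ne.symm haj), ← succAbove_delIdx (Ne.symm hbj), hc]

/-- `ψ` on the free group -/
noncomputable def PsiF : FreeAbelianGroup {g : Fin n → V // ∀ i, g i ≠ 0} →+ GroupA K V n :=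
  (mkA (K := K)).comp (FreeAbelianGroup.lift
    (fun e : {g : Fin n → V // ∀ i, g i ≠ 0} => FreeAbelianGroup.of (Fin.cons 0 e.1)))

/-- `φ` on the free group -/
noncomputable def PhiF : FreeAbelianGroup (Fin (n+1) → V) →+ GroupB K V n :=
  (mkB (K := K)).comp (FreeAbelianGroup.lift phiGen)

lemma PsiF_of (e : {g : Fin n → V // ∀ i, g i ≠ 0}) :
    PsiF (K := K) (of e) = mkA (of (Fin.cons 0 e.1)) := by
  simp [PsiF]

lemma PhiF_of (g : Fin (n+1) → V) : PhiF (K := K) (of g) = mkB (phiGen g) := by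
  simp [PhiF]

lemma relB_ker (hdim : Module.finrank K V = n) :
    ∀ x ∈ relB K V n, PsiF (K := K) x = 0 := by
  rintro x (⟨g, hdep, rfl⟩ | ⟨g, hg, rfl⟩)
  · rw [PsiF_of]
    apply mkA_of_not_span _ 0 (Fin.cons_zero _ _)
    rw [Fin.range_cons, span_insert_zero]
    exact fun htop => hdep ((indep_iff_span_top hdim g.1).2 htop)
  · rw [map_sum]
    simp only [map_zsmul, PsiF_of]
    -- term i: mkA (of (Fin.cons 0 (fun j => g (i.succAbove j))))
    set h : Fin (n+2) → V := Fin.cons 0 g with hh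
    have hrel : mkA (K := K) (∑ j : Fin (n+2), ((-1:ℤ)^(j:ℕ)) •
        of (fun k => h (j.succAbove k))) = 0 := mkA_eq_zero (Or.inr ⟨h, rfl⟩)
    rw [map_sum, Fin.sum_univ_succ] at hrel
    simp only [map_zsmul] at hrel
    have h0 : (fun k => h ((0 : Fin (n+2)).succAbove k)) = g := by
      funext k; rw [Fin.zero_succAbove, hh, Fin.cons_succ]
    have hsucc : ∀ (i : Fin (n+1)), (fun k => h (i.succ.succAbove k)) =
        Fin.cons (0:V) (fun j => g (i.succAbove j)) := by
      intro i; funext k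
      refine Fin.cases ?_ (fun j => ?_) k
      · rw [Fin.succ_succAbove_zero, hh, Fin.cons_zero, Fin.cons_zero]
      · rw [Fin.succ_succAbove_succ, hh, Fin.cons_succ, Fin.cons_succ]
    rw [h0] at hrel
    simp only [hsucc, Fin.val_succ, Fin.val_zero, pow_zero, one_smul, pow_succ, mul_comm,
      mul_smul, neg_one_smul] at hrel
    rw [mkA_of_no_zero g hg, zero_add, Finset.sum_neg_distrib] at hrel
    exact neg_eq_zero.1 hrel
lemma relA_ker (hn0 : 0 < n) (hdim : Module.finrank K V = n) :
    ∀ x ∈ relA K V n, PhiF (K := K) x = 0 := by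
  rintro x (⟨g, hcond, rfl⟩ | ⟨h, rfl⟩)
  · rw [PhiF_of]
    rcases hcond with hno | ⟨⟨i, h0⟩, hspan⟩
    · rw [phiGen_eq_zero_of_no_zero g (fun i hi => hno ⟨i, hi⟩), map_zero]
    · by_cases hu : ∀ j, j ≠ i → g j ≠ 0
      · rw [phiGen_eq g i h0 hu, map_zsmul]
        have hz : mkB (K := K) (of (⟨fun j => g (i.succAbove j),
            fun j => hu _ (Fin.succAbove_ne _ _)⟩ : {e : Fin n → V // ∀ i, e i ≠ 0})) = 0 := by
          apply mkB_eq_zero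
          left
          refine ⟨_, ?_, rfl⟩
          intro hind
          exact hspan (by rw [span_eq_rest g i h0]; exact (indep_iff_span_top hdim _).1 hind)
        rw [hz, smul_zero]
      · push_neg at hu
        obtain ⟨j, hji, hj⟩ := hu
        rw [phiGen_eq_zero_of_two_zeros g j i hj h0 hji, map_zero]
  · -- boundary relations
    rw [map_sum]
    simp only [map_zsmul, PhiF_of]
    set F : Fin (n+2) → GroupB K V n :=
      fun j => ((-1:ℤ)^(j:ℕ)) • mkB (phiGen (fun k => h (j.succAbove k))) with hF
    show ∑ j, F j = 0
    by_cases hz : ∃ p, h p = 0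
    · obtain ⟨p, hp⟩ := hz
      by_cases h2 : ∃ q, q ≠ p ∧ h q = 0
      · obtain ⟨q, hqp, hq⟩ := h2
        by_cases h3 : ∃ r, r ≠ p ∧ r ≠ q ∧ h r = 0
        · -- at least three zeros: every term vanishes
          obtain ⟨r, hrp, hrq, hr⟩ := h3
          refine Finset.sum_eq_zero (fun j _ => ?_)
          simp only [hF]
          by_cases hjp : j = p
          · rw [phiGen_comp_two_zeros h j q r hq hr (hjp ▸ hqp) (hjp ▸ hrp) (Ne.symm hrq),
              map_zero, smul_zero]
          · by_cases hjq : j = q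
            · rw [phiGen_comp_two_zeros h j p r hp hr (fun hc => hjp hc.symm)
                (fun hc => hrq (hc.trans hjq)) (Ne.symm hrp), map_zero, smul_zero]
            · rw [phiGen_comp_two_zeros h j p q hp hq (fun hc => hjp hc.symm)
                (fun hc => hjq hc.symm) (Ne.symm hqp), map_zero, smul_zero]
        · -- exactly two zeros
          push_neg at h3
          rw [sum_eq_pair F p q (Ne.symm hqp) (fun j hjp hjq => by
            simp only [hF]
            rw [phiGen_comp_two_zeros h j p q hp hq (Ne.symm hjp)
              (Ne.symm hjq) (Ne.symm hqp), map_zero, smul_zero])]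
          have hpq : p ≠ q := Ne.symm hqp
          -- compute F p
          have hFp : F p = ((-1:ℤ)^((p:ℕ) + ((delIdx p q : Fin (n+1)):ℕ))) •
              mkB (K := K) (of ⟨fun k => h (p.succAbove ((delIdx p q).succAbove k)),
                fun k => by
                  apply h3
                  · exact Fin.succAbove_ne _ _
                  · intro hc
                    exact Fin.succAbove_ne (delIdx p q) k
                      (Fin.succAbove_right_injective (p := p) (by rw [hc, succAbove_delIdx hpq]))⟩) := by
            simp only [hF]
            rw [phiGen_eq (fun k => h (p.succAbove k)) (delIdx p q)
              (by show h (p.succAbove (delIdx p q)) = 0; rw [succAbove_delIdx hpq]; exact hq)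
              (fun w hw => by
                show h (p.succAbove w) ≠ 0
                apply h3
                · exact Fin.succAbove_ne _ _
                · intro hc
                  exact hw (by rw [← hc, delIdx_succAbove]))]
            rw [map_zsmul, smul_smul, ← pow_add]
          have hFq : F q = ((-1:ℤ)^((q:ℕ) + ((delIdx q p : Fin (n+1)):ℕ))) •
              mkB (K := K) (of ⟨fun k => h (q.succAbove ((delIdx q p).succAbove k)),
                fun k => by
                  apply h3
                  · intro hc
                    exact Fin.succAbove_ne (delIdx q p) k
                      (Fin.succAbove_right_injective (p := q) (by rw [hc, succAbove_delIdx hqp]))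
                  · exact Fin.succAbove_ne _ _⟩) := by
            simp only [hF]
            rw [phiGen_eq (fun k => h (q.succAbove k)) (delIdx q p)
              (by show h (q.succAbove (delIdx q p)) = 0; rw [succAbove_delIdx hqp]; exact hp)
              (fun w hw => by
                show h (q.succAbove w) ≠ 0
                apply h3
                · intro hc
                  exact hw (by rw [← hc, delIdx_succAbove])
                · exact Fin.succAbove_ne _ _)]
            rw [map_zsmul, smul_smul, ← pow_add]
          have heq : mkB (K := K) (of (⟨fun k => h (p.succAbove ((delIdx p q).succAbove k)),
                fun k => by
                  apply h3
                  · exact Fin.succAbove_ne _ _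
                  · intro hc
                    exact Fin.succAbove_ne (delIdx p q) k
                      (Fin.succAbove_right_injective (p := p)
                        (by rw [hc, succAbove_delIdx hpq]))⟩ :
                {e : Fin n → V // ∀ i, e i ≠ 0})) =
              mkB (of (⟨fun k => h (q.succAbove ((delIdx q p).succAbove k)),
                fun k => by
                  apply h3
                  · intro hc
                    exact Fin.succAbove_ne (delIdx q p) k
                      (Fin.succAbove_right_injective (p := q)
                        (by rw [hc, succAbove_delIdx hqp]))
                  · exact Fin.succAbove_ne _ _⟩ :
                {e : Fin n → V // ∀ i, e i ≠ 0})) :=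
            congrArg _ (congrArg _ (Subtype.ext
              (funext fun k => congrArg h (succAbove_succAbove_delIdx hpq k))))
          rw [hFp, hFq, heq, neg_one_pow_eq_neg (delIdx_parity hpq), neg_smul, neg_add_cancel]
      · -- exactly one zero (at p)
        push_neg at h2
        rw [Fin.sum_univ_succAbove F p]
        have hFp : F p = 0 := by
          simp only [hF]
          rw [phiGen_eq_zero_of_no_zero _ (fun k => h2 (p.succAbove k) (Fin.succAbove_ne p k)),
            map_zero, smul_zero]
        rw [hFp, zero_add]
        -- remaining sum is (up to sign) a relation of type B
        have hX : ∀ i : Fin (n+1), F (p.succAbove i) =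
            (-1:ℤ)^(p:ℕ) • (-(((-1:ℤ)^(i:ℕ)) • mkB (K := K)
              (of (⟨fun j => h (p.succAbove (i.succAbove j)),
                fun j => h2 _ (Fin.succAbove_ne p (i.succAbove j))⟩ :
                {e : Fin n → V // ∀ i, e i ≠ 0})))) := by
          intro i
          have hap : p.succAbove i ≠ p := Fin.succAbove_ne p i
          simp only [hF]
          rw [phiGen_eq (fun k => h ((p.succAbove i).succAbove k)) (delIdx (p.succAbove i) p)
            (by show h ((p.succAbove i).succAbove (delIdx (p.succAbove i) p)) = 0
                rw [succAbove_delIdx hap]; exact hp)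
            (fun w hw => by
              show h ((p.succAbove i).succAbove w) ≠ 0
              apply h2
              intro hc
              exact hw (((delIdx_succAbove (p.succAbove i) w).symm).trans
                (congrArg (delIdx (p.succAbove i)) hc)))]
          rw [map_zsmul, smul_smul, ← pow_add]
          have heq2 : (⟨fun k => h ((p.succAbove i).succAbove
                ((delIdx (p.succAbove i) p).succAbove k)),
                fun k => by
                  show h ((p.succAbove i).succAbove
                    ((delIdx (p.succAbove i) p).succAbove k)) ≠ 0
                  rw [succAbove_succAbove_delIdx hap k, delIdx_succAbove]
                  exact h2 _ (Fin.succAbove_ne p _)⟩ :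
              {e : Fin n → V // ∀ i, e i ≠ 0}) =
              ⟨fun j => h (p.succAbove (i.succAbove j)),
                fun j => h2 _ (Fin.succAbove_ne p (i.succAbove j))⟩ := by
            apply Subtype.ext
            funext k
            show h ((p.succAbove i).succAbove ((delIdx (p.succAbove i) p).succAbove k)) =
              h (p.succAbove (i.succAbove k))
            rw [succAbove_succAbove_delIdx hap k, delIdx_succAbove]
          rw [heq2, neg_one_pow_eq_neg (delIdx_parity hap), delIdx_succAbove, pow_add,
            neg_smul, mul_smul, ← smul_neg]
        have hrelB : ∑ i : Fin (n+1), ((-1:ℤ)^(i:ℕ)) • mkB (K := K)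
            (of (⟨fun j => h (p.succAbove (i.succAbove j)),
              fun j => h2 _ (Fin.succAbove_ne p (i.succAbove j))⟩ :
              {e : Fin n → V // ∀ i, e i ≠ 0})) = 0 := by
          have h0 : mkB (K := K) (∑ i : Fin (n+1), ((-1:ℤ)^(i:ℕ)) •
              of (⟨fun j => h (p.succAbove (i.succAbove j)),
                fun j => h2 _ (Fin.succAbove_ne p (i.succAbove j))⟩ :
                {e : Fin n → V // ∀ i, e i ≠ 0})) = 0 :=
            mkB_eq_zero (Or.inr
              ⟨fun k => h (p.succAbove k), fun k => h2 _ (Fin.succAbove_ne p k), rfl⟩)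
          rw [map_sum] at h0
          simpa only [map_zsmul] using h0
        simp only [hX]
        rw [← Finset.smul_sum, Finset.sum_neg_distrib, hrelB, neg_zero, smul_zero]
    · -- no zero at all
      push_neg at hz
      refine Finset.sum_eq_zero (fun j _ => ?_)
      simp only [hF]
      rw [phiGen_eq_zero_of_no_zero _ (fun k => hz _), map_zero, smul_zero]
lemma zero_to_front (hn0 : 0 < n) (hdim : Module.finrank K V = n) :
    ∀ (m : ℕ) (g : Fin (n+1) → V) (i : Fin (n+1)), (i:ℕ) = m → g i = 0 →
    mkA (K := K) (of g) = ((-1:ℤ)^(i:ℕ)) •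
      mkA (of (Fin.cons 0 (fun j => g (i.succAbove j)))) := by
  intro m
  induction m with
  | zero =>
    intro g i hi h0
    have hi0 : i = 0 := Fin.ext (by simpa using hi)
    subst hi0
    have : Fin.cons (0:V) (fun j => g ((0 : Fin (n+1)).succAbove j)) = g := by
      funext k
      refine Fin.cases ?_ (fun j => ?_) k
      · rw [Fin.cons_zero, h0]
      · rw [Fin.cons_succ, Fin.zero_succAbove]
    rw [this, Fin.val_zero, pow_zero, one_smul]
  | succ m IH =>
    intro g i hi h0
    by_cases hu : ∀ j, j ≠ i → g j ≠ 0
    case neg =>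
      push_neg at hu
      obtain ⟨j, hji, hj⟩ := hu
      rw [mkA_of_two_zeros hn0 hdim g j i hj h0 hji]
      obtain ⟨z, hz⟩ := Fin.exists_succAbove_eq hji
      have hz2 : (Fin.cons (0:V) (fun k => g (i.succAbove k)) : Fin (n+1) → V) z.succ = 0 := by
        rw [Fin.cons_succ]; show g (i.succAbove z) = 0; rw [hz]; exact hj
      rw [mkA_of_two_zeros hn0 hdim _ 0 z.succ (Fin.cons_zero _ _) hz2
        (Ne.symm (Fin.succ_ne_zero z)), smul_zero]
    case pos =>
      have him : (i : ℕ) < n + 1 := i.isLt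
      set P : Fin (n+2) := ⟨m, by omega⟩ with hPdef
      set Q : Fin (n+2) := ⟨m+2, by omega⟩ with hQdef
      have hPQ : P ≠ Q := by rw [hPdef, hQdef]; intro hc; simpa using congrArg Fin.val hc
      set h : Fin (n+2) → V := P.insertNth 0 g with hhdef
      have hP : ∀ k, h (P.succAbove k) = g k := by
        intro k; rw [hhdef]; exact Fin.insertNth_apply_succAbove (α := fun _ : Fin (n+2) => V) P 0 g k
      have hhP : h P = 0 := by rw [hhdef]; exact Fin.insertNth_apply_same (α := fun _ : Fin (n+2) => V) P 0 g
      have hx : ∀ x, x ≠ P → h x = g (delIdx P x) := by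
        intro x hxP
        conv_lhs => rw [← succAbove_delIdx (Ne.symm hxP)]
        exact hP _
      have hdPQ : delIdx P Q = i := by
        apply Fin.ext
        rw [delIdx_val, hPdef, hQdef]
        simp only []
        rw [if_neg (by omega)]
        omega
      have hQ0 : h Q = 0 := by rw [hx Q (Ne.symm hPQ), hdPQ]; exact h0
      -- the boundary relation for h
      have hrel : mkA (K := K) (∑ j : Fin (n+2), ((-1:ℤ)^(j:ℕ)) •
          of (fun k => h (j.succAbove k))) = 0 := mkA_eq_zero (Or.inr ⟨h, rfl⟩)
      rw [map_sum] at hrel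
      simp only [map_zsmul] at hrel
      rw [sum_eq_pair (fun j => ((-1:ℤ)^(j:ℕ)) • mkA (K := K)
          (of (fun k => h (j.succAbove k)))) P Q hPQ (fun j hjP hjQ => by
        show ((-1:ℤ)^(j:ℕ)) • mkA (K := K) (of (fun k => h (j.succAbove k))) = 0
        have hz1 : (fun k => h (j.succAbove k)) (delIdx j P) = 0 := by
          show h (j.succAbove (delIdx j P)) = 0
          rw [succAbove_delIdx hjP]; exact hhP
        have hz2 : (fun k => h (j.succAbove k)) (delIdx j Q) = 0 := by
          show h (j.succAbove (delIdx j Q)) = 0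
          rw [succAbove_delIdx hjQ]; exact hQ0
        have hzz : delIdx j P ≠ delIdx j Q := by
          intro hc
          apply hPQ
          rw [← succAbove_delIdx hjP, ← succAbove_delIdx hjQ, hc]
        rw [mkA_of_two_zeros hn0 hdim _ _ _ hz1 hz2 hzz, smul_zero])] at hrel
      have hgP : (fun k => h (P.succAbove k)) = g := funext hP
      set g' : Fin (n+1) → V := fun k => h (Q.succAbove k) with hg'def
      rw [hgP] at hrel
      -- hrel : (-1)^P • mkA (of g) + (-1)^Q • mkA (of g') = 0
      have hPv : ((P : Fin (n+2)) : ℕ) = m := rfl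
      have hQv : ((Q : Fin (n+2)) : ℕ) = m + 2 := rfl
      rw [hPv, hQv] at hrel
      have hkey : mkA (K := K) (of g) = - mkA (of g') := by
        have heq2 : ((-1:ℤ)^(m+2)) = ((-1:ℤ)^m) := by ring
        rw [heq2, ← smul_add] at hrel
        have h1 : ((-1:ℤ)^m) • (((-1:ℤ)^m) • (mkA (K := K) (of g) + mkA (of g'))) =
            mkA (K := K) (of g) + mkA (of g') := by
          rw [smul_smul, ← pow_add, Even.neg_one_pow ⟨m, rfl⟩, one_smul]
        rw [hrel, smul_zero] at h1
        exact eq_neg_of_add_eq_zero_left h1.symm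
      set i' : Fin (n+1) := ⟨m, by omega⟩ with hi'def
      have hdQP : delIdx Q P = i' := by
        apply Fin.ext
        rw [delIdx_val]
        show (if m < m + 2 then m else m - 1) = m
        rw [if_pos (by omega)]
      have hQi' : Q.succAbove i' = P := by
        rw [← hdQP, succAbove_delIdx (Ne.symm hPQ)]
      have hg'i' : g' i' = 0 := by
        show h (Q.succAbove i') = 0
        rw [hQi']; exact hhP
      have hIH := IH g' i' rfl hg'i'
      have hcomp : (fun j => g' (i'.succAbove j)) = (fun j => g (i.succAbove j)) := by
        funext k
        show h (Q.succAbove (i'.succAbove k)) = g (i.succAbove k)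
        have e1 : Q.succAbove (i'.succAbove k) = P.succAbove (i.succAbove k) := by
          rw [← hdQP, ← hdPQ]
          exact succAbove_succAbove_delIdx (Ne.symm hPQ) k
        rw [e1, hP]
      rw [hkey, hIH, hcomp, hi, pow_succ, mul_neg_one, neg_smul]
end Main

/-- For `n = dim V ≥ 2` the two presentations yield isomorphic groups. -/
theorem presentationA_iso_presentationB [FiniteDimensional K V]
    (hn : 2 ≤ n) (hdim : Module.finrank K V = n) :
    Nonempty (GroupA K V n ≃+ GroupB K V n) := by
  classical
  have hn0 : 0 < n := by omega
  let Phi : GroupA K V n →+ GroupB K V n :=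
    QuotientAddGroup.lift (AddSubgroup.closure (relA K V n)) (PhiF (K := K))
      ((AddSubgroup.closure_le _).2
        (fun x hx => AddMonoidHom.mem_ker.2 (relA_ker hn0 hdim x hx)))
  let Psi : GroupB K V n →+ GroupA K V n :=
    QuotientAddGroup.lift (AddSubgroup.closure (relB K V n)) (PsiF (K := K))
      ((AddSubgroup.closure_le _).2
        (fun x hx => AddMonoidHom.mem_ker.2 (relB_ker hdim x hx)))
  have hPhi : ∀ x, Phi (mkA (K := K) x) = PhiF (K := K) x := fun _ => rfl
  have hPsi : ∀ x, Psi (mkB (K := K) x) = PsiF (K := K) x := fun _ => rfl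
  have key : ∀ z : FreeAbelianGroup (Fin (n+1) → V),
      Psi (Phi (mkA (K := K) z)) = mkA (K := K) z := by
    intro z
    refine FreeAbelianGroup.induction_on z ?_ ?_ ?_ ?_
    · simp
    · intro g
      rw [hPhi, PhiF_of]
      by_cases hex : ∃ i, g i = 0 ∧ ∀ j, j ≠ i → g j ≠ 0
      · obtain ⟨i, h0, h1⟩ := hex
        rw [phiGen_eq g i h0 h1, map_zsmul, map_zsmul]
        rw [hPsi, PsiF_of]
        exact (zero_to_front hn0 hdim (i:ℕ) g i rfl h0).symm
      · by_cases hz : ∃ i, g i = 0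
        · obtain ⟨i, hi⟩ := hz
          have h2 : ∃ j, j ≠ i ∧ g j = 0 := by
            by_contra hc
            push_neg at hc
            exact hex ⟨i, hi, fun j hj => hc j hj⟩
          obtain ⟨j, hji, hj⟩ := h2
          rw [phiGen_eq_zero_of_two_zeros g j i hj hi hji, map_zero, map_zero,
            mkA_of_two_zeros hn0 hdim g j i hj hi hji]
        · push_neg at hz
          rw [phiGen_eq_zero_of_no_zero g hz, map_zero, map_zero, mkA_of_no_zero g hz]
    · intro x hx
      rw [map_neg, map_neg, map_neg, hx]
    · intro x y hx hy
      rw [map_add, map_add, map_add, hx, hy]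
  have key2 : ∀ z : FreeAbelianGroup {g : Fin n → V // ∀ i, g i ≠ 0},
      Phi (Psi (mkB (K := K) z)) = mkB (K := K) z := by
    intro z
    refine FreeAbelianGroup.induction_on z ?_ ?_ ?_ ?_
    · simp
    · rintro ⟨f, hf⟩
      rw [hPsi, PsiF_of, hPhi, PhiF_of]
      have hcons0 : (Fin.cons (0:V) f : Fin (n+1) → V) 0 = 0 := Fin.cons_zero _ _
      have huniq : ∀ j, j ≠ (0 : Fin (n+1)) → (Fin.cons (0:V) f : Fin (n+1) → V) j ≠ 0 := by
        intro j hj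
        obtain ⟨k, rfl⟩ := Fin.eq_succ_of_ne_zero hj
        rw [Fin.cons_succ]
        exact hf k
      rw [phiGen_eq _ 0 hcons0 huniq]
      have harg : (⟨fun j => (Fin.cons (0:V) f : Fin (n+1) → V) ((0:Fin (n+1)).succAbove j),
          fun j => huniq _ (Fin.succAbove_ne _ _)⟩ : {e : Fin n → V // ∀ i, e i ≠ 0}) =
          ⟨f, hf⟩ :=
        Subtype.ext (funext fun j => by
          show (Fin.cons (0:V) f : Fin (n+1) → V) ((0:Fin (n+1)).succAbove j) = f j
          rw [Fin.zero_succAbove, Fin.cons_succ])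
      rw [harg, Fin.val_zero, pow_zero, one_smul]
    · intro x hx
      rw [map_neg, map_neg, map_neg, hx]
    · intro x y hx hy
      rw [map_add, map_add, map_add, hx, hy]
  exact ⟨{ toFun := Phi, invFun := Psi,
           left_inv := fun a => QuotientAddGroup.induction_on a key,
           right_inv := fun b => QuotientAddGroup.induction_on b key2,
           map_add' := map_add Phi }⟩
end

section
/- Let A be an integral Noetherian domain with fraction field K, and let d be a finitely generated torsion-free A-module of rank n with V = d ⊗_A K. The functor from the comma category Q^tf_{n−1}(A) ↓ d to the poset J(V) of proper layers of V, sending an object (c ↞ c' ↣ d) with kernel ker(φ) to the layer (ker(φ) ⊗ K, c' ⊗ K), is an isomorphism of categories. -/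
set_option linter.unusedSectionVars false
set_option linter.unusedVariables false

section CommaQAuxSection
open TensorProduct OrderDual IsLocalizedModule

section Aux

variable {A : Type*} [CommRing A] [IsDomain A]
variable {d : Type*} [AddCommGroup d] [Module A d]

instance commaQAux_isLocalizedModule :
    IsLocalizedModule (nonZeroDivisors A) (TensorProduct.mk A (FractionRing A) d 1) :=
  (isLocalizedModule_iff_isBaseChange (nonZeroDivisors A) (FractionRing A) _).mpr
    (TensorProduct.isBaseChange A d (FractionRing A))

variable [NoZeroSMulDivisors A d]

lemma commaQAux_f_inj :
    Function.Injective (TensorProduct.mk A (FractionRing A) d 1) := by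
  intro x y h
  have h0 : TensorProduct.mk A (FractionRing A) d 1 (x - y) = 0 := by
    rw [map_sub, h, sub_self]
  obtain ⟨s, hs⟩ := (IsLocalizedModule.eq_zero_iff (nonZeroDivisors A) _).mp h0
  rw [Submonoid.smul_def] at hs
  rcases smul_eq_zero.mp hs with h' | h'
  · exact absurd h' (nonZeroDivisors.coe_ne_zero s)
  · exact sub_eq_zero.mp h'

/-- `F N = N ⊗ K` as a subspace of `V`. -/
noncomputable def commaQF (N : Submodule A d) :
    Submodule (FractionRing A) ((FractionRing A) ⊗[A] d) :=
  N.localized' (FractionRing A) (nonZeroDivisors A) (TensorProduct.mk A (FractionRing A) d 1)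

/-- `G W = W ∩ d`. -/
noncomputable def commaQG (W : Submodule (FractionRing A) ((FractionRing A) ⊗[A] d)) : Submodule A d :=
  (W.restrictScalars A).comap (TensorProduct.mk A (FractionRing A) d 1)

lemma commaQF_eq_span (N : Submodule A d) :
    commaQF N = Submodule.span (FractionRing A)
      ((TensorProduct.mk A (FractionRing A) d 1) '' (N : Set d)) := by
  rw [commaQF]
  conv_lhs => rw [← Submodule.span_eq N]
  rw [Submodule.localized'_span]

lemma commaQ_mem_G {W} {x : d} :
    x ∈ commaQG (A := A) (d := d) W ↔ TensorProduct.mk A (FractionRing A) d 1 x ∈ W :=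
  Iff.rfl

lemma commaQGF (N : Submodule A d) (hN : NoZeroSMulDivisors A (d ⧸ N)) :
    commaQG (commaQF N) = N := by
  ext x
  rw [commaQ_mem_G]
  constructor
  · rintro ⟨m, hm, s, hs⟩
    rw [IsLocalizedModule.mk'_eq_iff, Submonoid.smul_def, ← map_smul] at hs
    have hsx : s.1 • x ∈ N := by
      rw [← commaQAux_f_inj hs]; exact hm
    have : (s.1 : A) • (Submodule.Quotient.mk x : d ⧸ N) = 0 := by
      rw [← Submodule.Quotient.mk_smul, Submodule.Quotient.mk_eq_zero]
      exact hsx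
    rcases smul_eq_zero.mp this with h' | h'
    · exact absurd h' (nonZeroDivisors.coe_ne_zero s)
    · rwa [Submodule.Quotient.mk_eq_zero] at h'
  · intro hx
    exact ⟨x, hx, 1, IsLocalizedModule.mk'_one _ _ _⟩

lemma commaQFG (W : Submodule (FractionRing A) ((FractionRing A) ⊗[A] d)) :
    commaQF (commaQG W) = W := by
  apply le_antisymm
  · rintro x ⟨m, hm, s, rfl⟩
    have h1 := IsLocalizedModule.mk'_smul_mk' (FractionRing A)
      (TensorProduct.mk A (FractionRing A) d 1) (1 : A) m s 1
    simp only [IsLocalizedModule.mk'_one, one_smul, mul_one] at h1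
    rw [← h1]
    exact W.smul_mem _ hm
  · intro x hx
    obtain ⟨⟨m, s⟩, hms⟩ := IsLocalizedModule.surj (nonZeroDivisors A)
      (TensorProduct.mk A (FractionRing A) d 1) x
    have hmW : TensorProduct.mk A (FractionRing A) d 1 m ∈ W := by
      rw [← hms, Submonoid.smul_def]
      exact (W.restrictScalars A).smul_mem _ hx
    exact ⟨m, hmW, s, IsLocalizedModule.mk'_eq_iff.mpr hms.symm⟩

lemma commaQG_pure (W : Submodule (FractionRing A) ((FractionRing A) ⊗[A] d)) :
    NoZeroSMulDivisors A (d ⧸ commaQG W) := by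
  constructor
  intro a x h
  by_cases ha : a = 0
  · exact Or.inl ha
  right
  obtain ⟨x, rfl⟩ := Submodule.Quotient.mk_surjective _ x
  rw [← Submodule.Quotient.mk_smul, Submodule.Quotient.mk_eq_zero] at h
  rw [Submodule.Quotient.mk_eq_zero]
  rw [commaQ_mem_G, map_smul] at h
  have ha' : algebraMap A (FractionRing A) a ≠ 0 := by
    simpa using fun h' => ha ((IsFractionRing.injective A (FractionRing A))
      (by rw [h', map_zero]))
  have := W.smul_mem (algebraMap A (FractionRing A) a)⁻¹ (by rwa [← algebraMap_smul (FractionRing A) a] at h)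
  rwa [← smul_assoc, smul_eq_mul, inv_mul_cancel₀ ha', one_smul, ← commaQ_mem_G] at this

lemma commaQF_mono : Monotone (commaQF (A := A) (d := d)) := by
  intro M N h
  rw [commaQF_eq_span, commaQF_eq_span]
  exact Submodule.span_mono (Set.image_mono h)

lemma commaQG_mono : Monotone (commaQG (A := A) (d := d)) := by
  intro M N h x hx
  exact h hx

lemma commaQF_le_iff {M N : Submodule A d} (hM : NoZeroSMulDivisors A (d ⧸ M))
    (hN : NoZeroSMulDivisors A (d ⧸ N)) : commaQF M ≤ commaQF N ↔ M ≤ N := by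
  constructor
  · intro h
    calc M = commaQG (commaQF M) := (commaQGF M hM).symm
    _ ≤ commaQG (commaQF N) := commaQG_mono h
    _ = N := commaQGF N hN
  · exact fun h => commaQF_mono h

lemma commaQG_bot : commaQG (A := A) (d := d) ⊥ = ⊥ := by
  ext x
  rw [commaQ_mem_G]
  simp only [Submodule.mem_bot]
  constructor
  · intro h
    exact commaQAux_f_inj (by rw [h, map_zero])
  · rintro rfl; exact map_zero _

lemma commaQG_top : commaQG (A := A) (d := d) ⊤ = ⊤ := rfl

lemma commaQF_eq_bot_iff {N : Submodule A d} (hN : NoZeroSMulDivisors A (d ⧸ N)) :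
    commaQF N = ⊥ ↔ N = ⊥ := by
  constructor
  · intro h
    rw [← commaQGF N hN, h, commaQG_bot]
  · rintro rfl
    unfold commaQF
    exact Submodule.localized'_bot (S := FractionRing A) _ _

lemma commaQF_eq_top_iff {N : Submodule A d} (hN : NoZeroSMulDivisors A (d ⧸ N)) :
    commaQF N = ⊤ ↔ N = ⊤ := by
  constructor
  · intro h
    rw [← commaQGF N hN, h, commaQG_top]
  · rintro rfl
    unfold commaQF
    exact Submodule.localized'_top (S := FractionRing A) _ _

end Aux

lemma commaQF_bot {A : Type*} [CommRing A] [IsDomain A] {d : Type*} [AddCommGroup d]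
    [Module A d] : commaQF (⊥ : Submodule A d) = ⊥ := by
  unfold commaQF
  exact Submodule.localized'_bot (S := FractionRing A) _ _

lemma commaQF_top {A : Type*} [CommRing A] [IsDomain A] {d : Type*} [AddCommGroup d]
    [Module A d] : commaQF (⊤ : Submodule A d) = ⊤ := by
  unfold commaQF
  exact Submodule.localized'_top (S := FractionRing A) _ _

end CommaQAuxSection

open TensorProduct OrderDual

variable (A : Type*) [CommRing A] [IsDomain A]
variable (d : Type*) [AddCommGroup d] [Module A d]

/-- The comma category `Q^tf_{n−1}(A) ↓ d`: by Quillen's description of morphisms in the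
Q-construction, its objects are spans `c ↞ c' ↣ d` with `c'` and `ker(c' ↠ c)` pure
submodules of `d`, not both `(0, d)`, and it is the poset of such pure layers
`(N₀, N₁) = (ker φ, c')` ordered by `(N₀,N₁) ≤ (N₀',N₁') ↔ N₀' ≤ N₀ ≤ N₁ ≤ N₁'`. -/
abbrev CommaQ : Type _ :=
  {p : (Submodule A d)ᵒᵈ × Submodule A d //
    ofDual p.1 ≤ p.2 ∧ NoZeroSMulDivisors A (d ⧸ ofDual p.1) ∧
      NoZeroSMulDivisors A (d ⧸ p.2) ∧ ¬(ofDual p.1 = ⊥ ∧ p.2 = ⊤)}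

/-- The poset `J(V)` of proper layers `(W₀, W₁)` of `V`, with
`(W₀,W₁) ≤ (W₀',W₁') ↔ W₀' ≤ W₀ ≤ W₁ ≤ W₁'`. -/
abbrev JV (K : Type*) [Field K] (V : Type*) [AddCommGroup V] [Module K V] : Type _ :=
  {q : (Submodule K V)ᵒᵈ × Submodule K V // ofDual q.1 ≤ q.2 ∧ ¬(ofDual q.1 = ⊥ ∧ q.2 = ⊤)}

/-- For `A` an integral Noetherian domain with fraction field `K` and `d` a finitely
generated torsion-free `A`-module of rank `n` with `V = d ⊗ K`, the functor
`Q^tf_{n−1}(A) ↓ d → J(V)` sending the span `c ↞(φ) c' ↣ d` to the proper layer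
`(ker(φ) ⊗ K, c' ⊗ K)` is an isomorphism of categories (of posets). -/
theorem commaQ_iso_JV [IsNoetherian A d] [NoZeroSMulDivisors A d] (n : ℕ)
    (hrank : Module.finrank (FractionRing A) ((FractionRing A) ⊗[A] d) = n) :
    ∃ e : CommaQ A d ≃o JV (FractionRing A) ((FractionRing A) ⊗[A] d),
      ∀ p : CommaQ A d,
        ofDual (e p).val.1 =
          Submodule.span (FractionRing A)
            ((TensorProduct.mk A (FractionRing A) d 1) '' ((ofDual p.val.1 : Submodule A d) : Set d)) ∧
        (e p).val.2 =
          Submodule.span (FractionRing A)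
            ((TensorProduct.mk A (FractionRing A) d 1) '' ((p.val.2 : Submodule A d) : Set d)) := by
  refine ⟨{
    toFun := fun p => ⟨(toDual (commaQF (ofDual p.val.1)), commaQF p.val.2),
      commaQF_mono p.2.1,
      fun h => p.2.2.2.2 ⟨(commaQF_eq_bot_iff p.2.2.1).mp h.1,
        (commaQF_eq_top_iff p.2.2.2.1).mp h.2⟩⟩
    invFun := fun q => ⟨(toDual (commaQG (ofDual q.val.1)), commaQG q.val.2),
      commaQG_mono q.2.1, commaQG_pure _, commaQG_pure _,
      fun h => q.2.2 ⟨by rw [← commaQFG (ofDual q.val.1), show commaQG (ofDual q.val.1) = ⊥ from h.1, commaQF_bot],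
        by rw [← commaQFG q.val.2, show commaQG q.val.2 = ⊤ from h.2, commaQF_top]⟩⟩
    left_inv := fun p => Subtype.ext (Prod.ext
      (congrArg toDual (commaQGF _ p.2.2.1)) (commaQGF _ p.2.2.2.1))
    right_inv := fun q => Subtype.ext (Prod.ext
      (congrArg toDual (commaQFG _)) (commaQFG _))
    map_rel_iff' := by
      intro p q
      constructor
      · rintro ⟨h1, h2⟩
        exact ⟨(commaQF_le_iff q.2.2.1 p.2.2.1).mp h1, (commaQF_le_iff p.2.2.2.1 q.2.2.2.1).mp h2⟩
      · rintro ⟨h1, h2⟩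
        exact ⟨commaQF_mono h1, commaQF_mono h2⟩
    }, ?_⟩
  intro p
  exact ⟨commaQF_eq_span _, commaQF_eq_span _⟩
end
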